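/- arXiv:2205.06172 — 3 statements merged into one kernel-verified Lean document; each statement's English description precedes it below -/
import Mathlib

section
/- Let W be a random variable valued in {1,…,K}, S a random variable valued in M-element subsets of {1,…,K}, and Q a finitely-valued random variable, all on a finite probability space. Fix a value q with P(Q=q) > 0 and suppose q corresponds to a partition of {1,…,K} into N parts q_1, …, q_N, each of size M+1. For each w ∈ {1,…,K}, let s_w denote the part containing w with w removed. Let L > 0 be a real constant and Γ(w) ∈ [0,1] for each w. Assume for every w ∈ {1,…,K}: (a) the event {Q=q} ∩ {W=w} is contained in {S=s_w}; (b) P(W=w, S=s_w) > 0 and P(Q=q | W=w, S=s_w) = Γ(w)/(N·L). If for all w, w' ∈ {1,…,K} one has Γ(w')·P(W=w', S=s_{w'})·P(W=w) = Γ(w)·P(W=w, S=s_w)·P(W=w'), then for every w ∈ {1,…,K}, P(W=w | Q=q) = P(W=w). -/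
open scoped Classical in
/-- Probability of an event `E` under the weight function `P` on a finite sample space. -/
noncomputable def pr {Ω : Type} [Fintype Ω] (P : Ω → ℝ) (E : Ω → Prop) : ℝ :=
  ∑ ω, if E ω then P ω else 0

open scoped Classical in
lemma pr_congr {Ω : Type} [Fintype Ω] (P : Ω → ℝ) {E F : Ω → Prop}
    (h : ∀ ω, E ω ↔ F ω) : pr P E = pr P F := by
  unfold pr; exact Finset.sum_congr rfl fun ω _ => by rw [if_congr (h ω) rfl rfl]

open scoped Classical in
lemma pr_nonneg {Ω : Type} [Fintype Ω] {P : Ω → ℝ} (hP0 : ∀ ω, 0 ≤ P ω)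
    (E : Ω → Prop) : 0 ≤ pr P E := by
  unfold pr
  exact Finset.sum_nonneg fun ω _ => by by_cases h : E ω <;> simp [h, hP0 ω]

open scoped Classical in
lemma pr_mono {Ω : Type} [Fintype Ω] {P : Ω → ℝ} (hP0 : ∀ ω, 0 ≤ P ω)
    {E F : Ω → Prop} (h : ∀ ω, E ω → F ω) : pr P E ≤ pr P F := by
  unfold pr
  apply Finset.sum_le_sum
  intro ω _
  by_cases hE : E ω
  · rw [if_pos hE, if_pos (h ω hE)]
  · rw [if_neg hE]; by_cases hF : F ω <;> simp [hF, hP0 ω]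

theorem stmt3 {Ω β : Type} [Fintype Ω] [Fintype β]
    {K M N : ℕ} (hM : 1 ≤ M) (hMK : M + 1 ≤ K) (hK : K = N * (M + 1))
    (P : Ω → ℝ) (hP0 : ∀ ω, 0 ≤ P ω) (hP1 : ∑ ω, P ω = 1)
    (W : Ω → Fin K) (S : Ω → Finset (Fin K)) (Q : Ω → β)
    (q0 : β) (hq0 : 0 < pr P (fun ω => Q ω = q0))
    -- q0 corresponds to a partition of {1,…,K} into N parts, each of size M+1
    (qs : Fin N → Finset (Fin K))
    (hqdisj : ∀ i j, i ≠ j → Disjoint (qs i) (qs j))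
    (hqcard : ∀ i, (qs i).card = M + 1)
    (hqcover : ∀ k : Fin K, ∃ i, k ∈ qs i)
    -- `part w` is the index of the part containing `w`; `s_w = qs (part w) \ {w}`
    (part : Fin K → Fin N) (hpart : ∀ w, w ∈ qs (part w))
    (L : ℝ) (hL : 0 < L)
    (Γ : Fin K → ℝ) (hΓ : ∀ w, 0 ≤ Γ w ∧ Γ w ≤ 1)
    -- (a) the event {Q = q0} ∩ {W = w} is contained in {S = s_w}
    (ha : ∀ (w : Fin K) (ω : Ω), Q ω = q0 → W ω = w → S ω = (qs (part w)).erase w)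
    -- (b) P(W=w, S=s_w) > 0 and P(Q=q0 | W=w, S=s_w) = Γ(w)/(N·L)
    (hb : ∀ w : Fin K,
      0 < pr P (fun ω => W ω = w ∧ S ω = (qs (part w)).erase w) ∧
      pr P (fun ω => Q ω = q0 ∧ W ω = w ∧ S ω = (qs (part w)).erase w)
          / pr P (fun ω => W ω = w ∧ S ω = (qs (part w)).erase w)
        = Γ w / ((N : ℝ) * L))
    -- proportionality condition
    (hprop : ∀ w w' : Fin K,
      Γ w' * pr P (fun ω => W ω = w' ∧ S ω = (qs (part w')).erase w')
          * pr P (fun ω => W ω = w)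
        = Γ w * pr P (fun ω => W ω = w ∧ S ω = (qs (part w)).erase w)
          * pr P (fun ω => W ω = w')) :
    ∀ w : Fin K,
      pr P (fun ω => W ω = w ∧ Q ω = q0) / pr P (fun ω => Q ω = q0)
        = pr P (fun ω => W ω = w) := by
  classical
  intro w
  have hN : 0 < N := by
    rcases Nat.eq_zero_or_pos N with h | h
    · subst h; simp at hK; omega
    · exact h
  have hNL : (0:ℝ) < (N:ℝ) * L := by positivity
  -- abbreviations (definitionally equal to the pr expressions)
  set A : Fin K → ℝ := fun v => pr P (fun ω => W ω = v ∧ S ω = (qs (part v)).erase v) with hA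
  set p : Fin K → ℝ := fun v => pr P (fun ω => W ω = v) with hp
  have hprop' : ∀ v v' : Fin K, Γ v' * A v' * p v = Γ v * A v * p v' := fun v v' => hprop v v'
  -- key : joint probability formula
  have key : ∀ v, pr P (fun ω => W ω = v ∧ Q ω = q0) = Γ v * A v / ((N:ℝ) * L) := by
    intro v
    have h1 : pr P (fun ω => W ω = v ∧ Q ω = q0)
        = pr P (fun ω => Q ω = q0 ∧ W ω = v ∧ S ω = (qs (part v)).erase v) := by
      apply pr_congr
      intro ω
      constructor
      · rintro ⟨h2, h3⟩; exact ⟨h3, h2, ha v ω h3 h2⟩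
      · rintro ⟨h2, h3, _⟩; exact ⟨h3, h2⟩
    have hbv := hb v
    have h2 := hbv.2
    rw [div_eq_iff (ne_of_gt hbv.1)] at h2
    rw [h1, h2]
    show Γ v / (↑N * L) * A v = Γ v * A v / (↑N * L)
    ring
  -- sum of p over all v is 1
  have hsum1 : ∑ v, p v = 1 := by
    simp only [hp]
    unfold pr
    rw [Finset.sum_comm]
    rw [← hP1]
    apply Finset.sum_congr rfl
    intro ω _
    rw [Finset.sum_eq_single_of_mem (W ω) (Finset.mem_univ _)]
    · exact if_pos rfl
    · intro x _ hx; exact if_neg fun h => hx h.symm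
  -- decompose pr(Q=q0)
  have hQdec : pr P (fun ω => Q ω = q0) = ∑ v, pr P (fun ω => W ω = v ∧ Q ω = q0) := by
    unfold pr
    rw [Finset.sum_comm]
    apply Finset.sum_congr rfl
    intro ω _
    by_cases h : Q ω = q0
    · simp [h]
    · simp [h]
  by_cases hpw : p w = 0
  · -- numerator is 0
    have hnum : pr P (fun ω => W ω = w ∧ Q ω = q0) = 0 := by
      have hle : pr P (fun ω => W ω = w ∧ Q ω = q0) ≤ p w :=
        pr_mono hP0 fun ω h => h.1
      have hge := pr_nonneg hP0 (fun ω => W ω = w ∧ Q ω = q0)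
      linarith
    rw [hnum, zero_div]
    exact hpw.symm
  · have hpw' : 0 < p w := lt_of_le_of_ne (pr_nonneg hP0 _) (Ne.symm hpw)
    have hQval : pr P (fun ω => Q ω = q0) = Γ w * A w / (((N:ℝ) * L) * p w) := by
      rw [hQdec]
      have step : ∀ v, pr P (fun ω => W ω = v ∧ Q ω = q0)
          = Γ w * A w * p v / (((N:ℝ) * L) * p w) := by
        intro v
        rw [key v]
        rw [div_eq_div_iff (ne_of_gt hNL) (ne_of_gt (by positivity : (0:ℝ) < ((N:ℝ)*L) * p w))]
        linear_combination ((N:ℝ) * L) * hprop' w v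
      rw [Finset.sum_congr rfl fun v _ => step v]
      rw [← Finset.sum_div, ← Finset.mul_sum, hsum1, mul_one]
    have hΓA : Γ w * A w ≠ 0 := by
      intro h
      rw [hQval, h, zero_div] at hq0
      exact lt_irrefl 0 hq0
    have hgoal : (pr P fun ω => W ω = w) = p w := rfl
    rw [key w, hQval, hgoal]
    have hΓ0 : Γ w ≠ 0 := left_ne_zero_of_mul hΓA
    have hA0 : A w ≠ 0 := right_ne_zero_of_mul hΓA
    field_simp
end

section
/- Let K and M be integers with 1 ≤ M ≤ K−1 and let λ_1 ≥ λ_2 ≥ ⋯ ≥ λ_K > 0 be real numbers. Then the minimum, over all w ∈ {1,…,K} and all M-element subsets s of {1,…,K}∖{w}, of the ratio p(w,s)/p_W(w) equals the minimum over i ∈ {K−M,…,K} of p({i}, {K−M,…,K}∖{i}) / p_W(i). -/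
/-- `lbar K lam T = Σ_{k ∈ {1,…,K} \ T} λ_k`. -/
noncomputable def lbar (K : ℕ) (lam : ℕ → ℝ) (T : Finset ℕ) : ℝ :=
  ∑ k ∈ Finset.Icc 1 K \ T, lam k

/-- The joint pmf `p(w, s) = (1 / C(K,M)) · λ_w / λ_s̄`. -/
noncomputable def pjoint (K M : ℕ) (lam : ℕ → ℝ) (w : ℕ) (s : Finset ℕ) : ℝ :=
  (1 / (K.choose M : ℝ)) * (lam w / lbar K lam s)

/-- The marginal `p_W(w) = Σ_s p(w, s)`, summed over `M`-subsets of `{1,…,K} \ {w}`. -/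
noncomputable def pW (K M : ℕ) (lam : ℕ → ℝ) (w : ℕ) : ℝ :=
  ∑ s ∈ Finset.powersetCard M ((Finset.Icc 1 K).erase w), pjoint K M lam w s


noncomputable def Dm (K M : ℕ) (lam : ℕ → ℝ) (w : ℕ) : ℝ :=
  ∑ s ∈ Finset.powersetCard M ((Finset.Icc 1 K).erase w), (lbar K lam s)⁻¹

lemma lbar_pos {K M : ℕ} (hMK : M + 1 ≤ K) (lam : ℕ → ℝ)
    (hpos : ∀ i, 1 ≤ i → i ≤ K → 0 < lam i) {s : Finset ℕ} (hs : s.card = M) :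
    0 < lbar K lam s := by
  have hne : (Finset.Icc 1 K \ s).Nonempty := by
    rw [Finset.sdiff_nonempty]
    intro hsub
    have := Finset.card_le_card hsub
    rw [Nat.card_Icc, hs] at this; omega
  refine Finset.sum_pos (fun k hk => ?_) hne
  have h1 := Finset.mem_sdiff.1 hk
  have h2 := Finset.mem_Icc.1 h1.1
  exact hpos k h2.1 h2.2


lemma sum_le_init {K : ℕ} (lam : ℕ → ℝ)
    (hmono : ∀ i j, 1 ≤ i → i ≤ j → j ≤ K → lam j ≤ lam i) :
    ∀ n (T : Finset ℕ), T.card = n → T ⊆ Finset.Icc 1 K →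
      ∑ k ∈ T, lam k ≤ ∑ k ∈ Finset.Icc 1 n, lam k := by
  intro n
  induction n with
  | zero => intro T hT _; rw [Finset.card_eq_zero.1 hT]; simp
  | succ n ih =>
    intro T hT hTsub
    have hTne : T.Nonempty := Finset.card_pos.1 (by omega)
    set t := T.max' hTne with ht
    have htT : t ∈ T := T.max'_mem hTne
    have htK : t ∈ Finset.Icc 1 K := hTsub htT
    have ht1 : 1 ≤ t := (Finset.mem_Icc.1 htK).1
    have htK' : t ≤ K := (Finset.mem_Icc.1 htK).2
    have hTt : T ⊆ Finset.Icc 1 t := by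
      intro x hx
      exact Finset.mem_Icc.2 ⟨(Finset.mem_Icc.1 (hTsub hx)).1, T.le_max' x hx⟩
    have hcardle : n + 1 ≤ t := by
      have := Finset.card_le_card hTt
      rw [hT, Nat.card_Icc] at this; omega
    have hsplit : ∑ k ∈ T, lam k = (∑ k ∈ T.erase t, lam k) + lam t :=
      (Finset.sum_erase_add T lam htT).symm
    have hsplit2 : ∑ k ∈ Finset.Icc 1 (n+1), lam k
        = (∑ k ∈ Finset.Icc 1 n, lam k) + lam (n+1) :=
      Finset.sum_Icc_succ_top (by omega) lam
    rw [hsplit, hsplit2]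
    have h1 : ∑ k ∈ T.erase t, lam k ≤ ∑ k ∈ Finset.Icc 1 n, lam k := by
      refine ih _ (by rw [Finset.card_erase_of_mem htT, hT]; omega) ?_
      exact fun x hx => hTsub (Finset.erase_subset _ _ hx)
    have h2 : lam t ≤ lam (n+1) := hmono (n+1) t (by omega) hcardle htK'
    linarith

lemma Dm_mono {K M : ℕ} (hM : 1 ≤ M) (hMK : M + 1 ≤ K) (lam : ℕ → ℝ)
    (hmono : ∀ i j, 1 ≤ i → i ≤ j → j ≤ K → lam j ≤ lam i)
    (hpos : ∀ i, 1 ≤ i → i ≤ K → 0 < lam i)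
    {w v : ℕ} (hw : 1 ≤ w) (hwv : w ≤ v) (hv : v ≤ K) :
    Dm K M lam w ≤ Dm K M lam v := by
  rcases eq_or_lt_of_le hwv with rfl | hlt
  · exact le_refl _
  classical
  set A := Finset.Icc 1 K with hA
  set e : Finset ℕ → Finset ℕ := fun s => if v ∈ s then insert w (s.erase v) else s with he
  have hwA : w ∈ A := Finset.mem_Icc.2 ⟨hw, le_trans (le_of_lt hlt) hv⟩
  have hvA : v ∈ A := Finset.mem_Icc.2 ⟨le_trans hw (le_of_lt hlt), hv⟩
  have hne : w ≠ v := Nat.ne_of_lt hlt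
  -- properties of s in P_w
  have hmem : ∀ s ∈ Finset.powersetCard M (A.erase w),
      s ⊆ A ∧ w ∉ s ∧ s.card = M := by
    intro s hs
    rw [Finset.mem_powersetCard] at hs
    exact ⟨fun x hx => (Finset.mem_erase.1 (hs.1 hx)).2,
      fun hws => (Finset.mem_erase.1 (hs.1 hws)).1 rfl, hs.2⟩
  have hmaps : ∀ s ∈ Finset.powersetCard M (A.erase w),
      e s ∈ Finset.powersetCard M (A.erase v) := by
    intro s hs
    obtain ⟨hsub, hws, hcard⟩ := hmem s hs
    rw [Finset.mem_powersetCard]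
    by_cases hvs : v ∈ s
    · simp only [he, if_pos hvs]
      have hwe : w ∉ s.erase v := fun h => hws (Finset.mem_of_mem_erase h)
      constructor
      · intro x hx
        rcases Finset.mem_insert.1 hx with rfl | hx'
        · exact Finset.mem_erase.2 ⟨hne, hwA⟩
        · exact Finset.mem_erase.2 ⟨(Finset.mem_erase.1 hx').1,
            hsub (Finset.mem_of_mem_erase hx')⟩
      · rw [Finset.card_insert_of_notMem hwe, Finset.card_erase_of_mem hvs, hcard]
        omega
    · simp only [he, if_neg hvs]
      exact ⟨fun x hx => Finset.mem_erase.2 ⟨fun h => hvs (h ▸ hx), hsub hx⟩, hcard⟩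
  have hterm : ∀ s ∈ Finset.powersetCard M (A.erase w),
      (lbar K lam s)⁻¹ ≤ (lbar K lam (e s))⁻¹ := by
    intro s hs
    obtain ⟨hsub, hws, hcard⟩ := hmem s hs
    by_cases hvs : v ∈ s
    · have hne' : v ≠ w := hne.symm
      have h1v : 1 ≤ v ∧ v ≤ K := Finset.mem_Icc.1 hvA
      have hset : A \ e s = insert v ((A \ s).erase w) := by
        ext k
        by_cases hkv : k = v
        · subst hkv
          simp only [he, if_pos hvs, Finset.mem_sdiff, Finset.mem_insert,
            Finset.mem_erase, Finset.mem_Icc, hA]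
          tauto
        · simp only [he, if_pos hvs, Finset.mem_sdiff, Finset.mem_insert,
            Finset.mem_erase, Finset.mem_Icc, hA]
          tauto
      have hwAs : w ∈ A \ s := Finset.mem_sdiff.2 ⟨hwA, hws⟩
      have hvnot : v ∉ (A \ s).erase w := by
        intro h
        exact (Finset.mem_sdiff.1 (Finset.mem_of_mem_erase h)).2 hvs
      have hval : lbar K lam (e s) = lam v + (lbar K lam s - lam w) := by
        rw [lbar, hset, Finset.sum_insert hvnot]
        congr 1
        have := Finset.sum_erase_add (A \ s) lam hwAs
        rw [lbar]
        linarith [this]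
      have hle : lbar K lam (e s) ≤ lbar K lam s := by
        have := hmono w v hw (le_of_lt hlt) hv
        rw [hval]; linarith
      have hpos' : 0 < lbar K lam (e s) :=
        lbar_pos hMK lam hpos (Finset.mem_powersetCard.1 (hmaps s hs)).2
      exact inv_anti₀ hpos' hle
    · simp only [he, if_neg hvs]; exact le_refl _
  have hinj : Set.InjOn e (Finset.powersetCard M (A.erase w)) := by
    intro s1 h1 s2 h2 heq
    obtain ⟨_, hw1, _⟩ := hmem s1 (by exact_mod_cast h1)
    obtain ⟨_, hw2, _⟩ := hmem s2 (by exact_mod_cast h2)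
    by_cases hv1 : v ∈ s1 <;> by_cases hv2 : v ∈ s2
    · simp only [he, if_pos hv1, if_pos hv2] at heq
      have hw1' : w ∉ s1.erase v := fun h => hw1 (Finset.mem_of_mem_erase h)
      have hw2' : w ∉ s2.erase v := fun h => hw2 (Finset.mem_of_mem_erase h)
      have : s1.erase v = s2.erase v := by
        have := congrArg (fun t => Finset.erase t w) heq
        simpa [Finset.erase_insert hw1', Finset.erase_insert hw2'] using this
      have := congrArg (fun t => insert v t) this
      simpa [Finset.insert_erase hv1, Finset.insert_erase hv2] using this
    · exfalso
      simp only [he, if_pos hv1, if_neg hv2] at heq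
      exact hw2 (heq ▸ Finset.mem_insert_self w _)
    · exfalso
      simp only [he, if_neg hv1, if_pos hv2] at heq
      exact hw1 (heq ▸ Finset.mem_insert_self w _)
    · simpa [he, if_neg hv1, if_neg hv2] using heq
  calc Dm K M lam w ≤ ∑ s ∈ Finset.powersetCard M (A.erase w), (lbar K lam (e s))⁻¹ :=
        Finset.sum_le_sum hterm
    _ = ∑ t ∈ (Finset.powersetCard M (A.erase w)).image e, (lbar K lam t)⁻¹ :=
        by rw [Finset.sum_image (fun x hx y hy h => hinj hx hy h)]
    _ ≤ Dm K M lam v := by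
        refine Finset.sum_le_sum_of_subset_of_nonneg ?_ ?_
        · intro t ht
          obtain ⟨s, hs, rfl⟩ := Finset.mem_image.1 ht
          exact hmaps s hs
        · intro t ht _
          exact le_of_lt (inv_pos.2 (lbar_pos hMK lam hpos
            (Finset.mem_powersetCard.1 ht).2))

lemma Dm_pos {K M : ℕ} (hMK : M + 1 ≤ K) (lam : ℕ → ℝ)
    (hpos : ∀ i, 1 ≤ i → i ≤ K → 0 < lam i) (w : ℕ) :
    0 < Dm K M lam w := by
  refine Finset.sum_pos (fun s hs => inv_pos.2 (lbar_pos hMK lam hpos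
    (Finset.mem_powersetCard.1 hs).2)) ?_
  refine Finset.powersetCard_nonempty.2 ?_
  rcases Finset.decidableMem w (Finset.Icc 1 K) with h | h
  · rw [Finset.erase_eq_of_notMem h, Nat.card_Icc]; omega
  · rw [Finset.card_erase_of_mem h, Nat.card_Icc]; omega

lemma pW_eq (K M : ℕ) (lam : ℕ → ℝ) (w : ℕ) :
    pW K M lam w = (1 / (K.choose M : ℝ)) * lam w * Dm K M lam w := by
  simp [pW, pjoint, Dm, Finset.mul_sum, div_eq_mul_inv, mul_assoc]

lemma choose_pos' {K M : ℕ} (hMK : M + 1 ≤ K) : (0:ℝ) < 1 / (K.choose M : ℝ) := by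
  have : 0 < K.choose M := Nat.choose_pos (by omega)
  positivity

lemma ratio_eq {K M : ℕ} (hMK : M + 1 ≤ K) (lam : ℕ → ℝ)
    (hpos : ∀ i, 1 ≤ i → i ≤ K → 0 < lam i) {w : ℕ} (hw : w ∈ Finset.Icc 1 K)
    {s : Finset ℕ} (hs : s.card = M) :
    pjoint K M lam w s / pW K M lam w = (lbar K lam s * Dm K M lam w)⁻¹ := by
  have hw' := Finset.mem_Icc.1 hw
  have hc := choose_pos' hMK
  have hl := hpos w hw'.1 hw'.2
  have hlb := lbar_pos hMK lam hpos hs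
  have hD := Dm_pos hMK lam hpos w
  rw [pW_eq, pjoint]
  have hcl : (1/(K.choose M:ℝ)) * lam w ≠ 0 := ne_of_gt (mul_pos hc hl)
  rw [show (1/(K.choose M:ℝ)) * (lam w / lbar K lam s)
      = (1/(K.choose M:ℝ)) * lam w * (lbar K lam s)⁻¹ by ring]
  rw [mul_div_mul_left _ _ hcl, div_eq_mul_inv, ← mul_inv]

lemma si_mem {K M : ℕ} (hM : 1 ≤ M) (hMK : M + 1 ≤ K) {i : ℕ}
    (hi : i ∈ Finset.Icc (K - M) K) :
    (Finset.Icc (K - M) K).erase i ∈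
      Finset.powersetCard M ((Finset.Icc 1 K).erase i) := by
  have hi' := Finset.mem_Icc.1 hi
  rw [Finset.mem_powersetCard]
  constructor
  · intro x hx
    have hx' := Finset.mem_erase.1 hx
    have hx'' := Finset.mem_Icc.1 hx'.2
    exact Finset.mem_erase.2 ⟨hx'.1, Finset.mem_Icc.2 ⟨by omega, hx''.2⟩⟩
  · rw [Finset.card_erase_of_mem hi, Nat.card_Icc]; omega

lemma compl_si {K M : ℕ} (hM : 1 ≤ M) (hMK : M + 1 ≤ K) {i : ℕ}
    (hi : i ∈ Finset.Icc (K - M) K) :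
    Finset.Icc 1 K \ (Finset.Icc (K - M) K).erase i
      = insert i (Finset.Icc 1 (K - M - 1)) := by
  have hi' := Finset.mem_Icc.1 hi
  ext k
  simp only [Finset.mem_sdiff, Finset.mem_erase, Finset.mem_Icc, Finset.mem_insert]
  constructor
  · rintro ⟨h1, h2⟩
    by_cases hk : k = i
    · exact Or.inl hk
    · right; constructor
      · omega
      · by_contra h
        push_neg at h
        exact h2 ⟨hk, by omega, h1.2⟩
  · rintro (rfl | h)
    · refine ⟨⟨by omega, by omega⟩, ?_⟩
      rintro ⟨hne, _, _⟩; exact hne rfl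
    · refine ⟨⟨by omega, by omega⟩, ?_⟩
      rintro ⟨_, h3, _⟩; omega

lemma lbar_si {K M : ℕ} (hM : 1 ≤ M) (hMK : M + 1 ≤ K) (lam : ℕ → ℝ) {i : ℕ}
    (hi : i ∈ Finset.Icc (K - M) K) :
    lbar K lam ((Finset.Icc (K - M) K).erase i)
      = lam i + ∑ k ∈ Finset.Icc 1 (K - M - 1), lam k := by
  have hi' := Finset.mem_Icc.1 hi
  rw [lbar, compl_si hM hMK hi, Finset.sum_insert]
  intro h
  have := (Finset.mem_Icc.1 h).2
  omega

lemma key_ineq {K M : ℕ} (hM : 1 ≤ M) (hMK : M + 1 ≤ K) (lam : ℕ → ℝ)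
    (hmono : ∀ i j, 1 ≤ i → i ≤ j → j ≤ K → lam j ≤ lam i)
    (hpos : ∀ i, 1 ≤ i → i ≤ K → 0 < lam i)
    {w : ℕ} (hw : w ∈ Finset.Icc 1 K) {s : Finset ℕ}
    (hs : s ∈ Finset.powersetCard M ((Finset.Icc 1 K).erase w)) :
    ∃ i ∈ Finset.Icc (K - M) K,
      pjoint K M lam i ((Finset.Icc (K - M) K).erase i) / pW K M lam i
        ≤ pjoint K M lam w s / pW K M lam w := by
  have hw' := Finset.mem_Icc.1 hw
  obtain ⟨hssub, hscard⟩ := Finset.mem_powersetCard.1 hs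
  have hsubA : s ⊆ Finset.Icc 1 K := fun x hx => Finset.mem_of_mem_erase (hssub hx)
  have hws : w ∉ s := fun h => (Finset.mem_erase.1 (hssub h)).1 rfl
  set i := max w (K - M) with hi_def
  have hi : i ∈ Finset.Icc (K - M) K :=
    Finset.mem_Icc.2 ⟨le_max_right _ _, max_le hw'.2 (by omega)⟩
  have hi' := Finset.mem_Icc.1 hi
  refine ⟨i, hi, ?_⟩
  have hsicard : ((Finset.Icc (K - M) K).erase i).card = M :=
    (Finset.mem_powersetCard.1 (si_mem hM hMK hi)).2
  have hiA : i ∈ Finset.Icc 1 K := Finset.mem_Icc.2 ⟨by omega, hi'.2⟩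
  rw [ratio_eq hMK lam hpos hw hscard, ratio_eq hMK lam hpos hiA hsicard]
  -- reduce to product inequality
  have hlb_s : 0 < lbar K lam s := lbar_pos hMK lam hpos hscard
  have hlb_si : 0 < lbar K lam ((Finset.Icc (K - M) K).erase i) :=
    lbar_pos hMK lam hpos hsicard
  have hDw : 0 < Dm K M lam w := Dm_pos hMK lam hpos w
  have hDi : 0 < Dm K M lam i := Dm_pos hMK lam hpos i
  have hD : Dm K M lam w ≤ Dm K M lam i :=
    Dm_mono hM hMK lam hmono hpos hw'.1 (le_max_left _ _) hi'.2
  have hlbar : lbar K lam s ≤ lbar K lam ((Finset.Icc (K - M) K).erase i) := by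
    rw [lbar_si hM hMK lam hi]
    rcases le_or_gt (K - M) w with hcase | hcase
    · -- i = w; complement of s contains w
      have hiw : i = w := by rw [hi_def]; omega
      have hwAs : w ∈ Finset.Icc 1 K \ s := Finset.mem_sdiff.2 ⟨hw, hws⟩
      have hsplit : lbar K lam s
          = (∑ k ∈ (Finset.Icc 1 K \ s).erase w, lam k) + lam w := by
        rw [lbar, ← Finset.sum_erase_add _ _ hwAs]
      have hcard : ((Finset.Icc 1 K \ s).erase w).card = K - M - 1 := by
        rw [Finset.card_erase_of_mem hwAs, Finset.card_sdiff_of_subset hsubA,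
          Nat.card_Icc, hscard]
        omega
      have hle : ∑ k ∈ (Finset.Icc 1 K \ s).erase w, lam k
          ≤ ∑ k ∈ Finset.Icc 1 (K - M - 1), lam k :=
        sum_le_init lam hmono _ _ hcard
          (fun x hx => (Finset.mem_sdiff.1 (Finset.mem_of_mem_erase hx)).1)
      rw [hsplit, hiw]
      linarith
    · -- i = K - M
      have hiw : i = K - M := by rw [hi_def]; omega
      have hcard : (Finset.Icc 1 K \ s).card = K - M := by
        rw [Finset.card_sdiff_of_subset hsubA, Nat.card_Icc, hscard]; omega
      have hle : lbar K lam s ≤ ∑ k ∈ Finset.Icc 1 (K - M), lam k :=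
        sum_le_init lam hmono _ _ hcard (fun x hx => (Finset.mem_sdiff.1 hx).1)
      have hsplit : ∑ k ∈ Finset.Icc 1 (K - M), lam k
          = (∑ k ∈ Finset.Icc 1 (K - M - 1), lam k) + lam (K - M) := by
        have h1 : K - M = (K - M - 1) + 1 := by omega
        rw [h1, Finset.sum_Icc_succ_top (by omega) lam]; simp
      rw [hiw]
      rw [hsplit] at hle
      linarith
  refine inv_anti₀ (mul_pos hlb_s hDw) ?_
  exact mul_le_mul hlbar hD (le_of_lt hDw) (le_of_lt hlb_si)

theorem stmt7 {K M : ℕ} (hM : 1 ≤ M) (hMK : M + 1 ≤ K) (lam : ℕ → ℝ)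
    (hmono : ∀ i j, 1 ≤ i → i ≤ j → j ≤ K → lam j ≤ lam i)
    (hpos : ∀ i, 1 ≤ i → i ≤ K → 0 < lam i) :
    sInf {x : ℝ | ∃ w ∈ Finset.Icc 1 K,
        ∃ s ∈ Finset.powersetCard M ((Finset.Icc 1 K).erase w),
          x = pjoint K M lam w s / pW K M lam w}
      = sInf {x : ℝ | ∃ i ∈ Finset.Icc (K - M) K,
          x = pjoint K M lam i ((Finset.Icc (K - M) K).erase i) / pW K M lam i} := by
  classical
  set S1 : Set ℝ := {x : ℝ | ∃ w ∈ Finset.Icc 1 K,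
      ∃ s ∈ Finset.powersetCard M ((Finset.Icc 1 K).erase w),
        x = pjoint K M lam w s / pW K M lam w} with hS1
  set S2 : Set ℝ := {x : ℝ | ∃ i ∈ Finset.Icc (K - M) K,
      x = pjoint K M lam i ((Finset.Icc (K - M) K).erase i) / pW K M lam i} with hS2
  have hsub : S2 ⊆ S1 := by
    rintro x ⟨i, hi, rfl⟩
    have hi' := Finset.mem_Icc.1 hi
    exact ⟨i, Finset.mem_Icc.2 ⟨by omega, hi'.2⟩, _, si_mem hM hMK hi, rfl⟩
  have hpos_elem : ∀ x ∈ S1, 0 < x := by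
    rintro x ⟨w, hw, s, hs, rfl⟩
    have hscard := (Finset.mem_powersetCard.1 hs).2
    rw [ratio_eq hMK lam hpos hw hscard]
    exact inv_pos.2 (mul_pos (lbar_pos hMK lam hpos hscard) (Dm_pos hMK lam hpos w))
  have hbdd1 : BddBelow S1 := ⟨0, fun x hx => le_of_lt (hpos_elem x hx)⟩
  have hbdd2 : BddBelow S2 := ⟨0, fun x hx => le_of_lt (hpos_elem x (hsub hx))⟩
  have hne2 : S2.Nonempty :=
    ⟨_, ⟨K, Finset.mem_Icc.2 ⟨by omega, le_refl K⟩, rfl⟩⟩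
  have hne1 : S1.Nonempty := hne2.mono hsub
  apply le_antisymm
  · exact csInf_le_csInf hbdd1 hne2 hsub
  · refine le_csInf hne1 ?_
    rintro x ⟨w, hw, s, hs, rfl⟩
    obtain ⟨i, hi, hle⟩ := key_ineq hM hMK lam hmono hpos hw hs
    exact le_trans (csInf_le hbdd2 ⟨i, hi, rfl⟩) hle
end

section
/- Let K and M be integers with 1 ≤ M ≤ K−1 and let λ_1 ≥ λ_2 ≥ ⋯ ≥ λ_K > 0 be real numbers. Define Γ₀ = min over i ∈ {K−M,…,K} of min{1, p({i}, {K−M,…,K}∖{i}) · p_W(1) / (p(1, {2,…,M+1}) · p_W(i))}, and for each w ∈ {1,…,K} and each M-element subset s of {1,…,K}∖{w}, define Γ(w,s) = Γ₀ · p(1, {2,…,M+1}) · p_W(w) / (p(w,s) · p_W(1)). Then Γ₀ > 0 and 0 < Γ(w,s) ≤ 1 for every such pair (w,s). -/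
/-- `Γ₀ = min_{i ∈ {K−M,…,K}} min{1, p(i, {K−M,…,K}∖{i}) · p_W(1) / (p(1, {2,…,M+1}) · p_W(i))}`. -/
noncomputable def gamma0 (K M : ℕ) (lam : ℕ → ℝ) : ℝ :=
  (Finset.Icc (K - M) K).inf' (Finset.nonempty_Icc.mpr (Nat.sub_le K M))
    (fun i => min 1
      (pjoint K M lam i ((Finset.Icc (K - M) K).erase i) * pW K M lam 1
        / (pjoint K M lam 1 (Finset.Icc 2 (M + 1)) * pW K M lam i)))

/-- `Γ(w, s) = Γ₀ · p(1, {2,…,M+1}) · p_W(w) / (p(w, s) · p_W(1))`,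
with an arbitrary constant `g0` in place of `Γ₀`. -/
noncomputable def gammaWS (K M : ℕ) (lam : ℕ → ℝ) (g0 : ℝ) (w : ℕ) (s : Finset ℕ) : ℝ :=
  g0 * pjoint K M lam 1 (Finset.Icc 2 (M + 1)) * pW K M lam w
    / (pjoint K M lam w s * pW K M lam 1)

section aux

variable {K M : ℕ} {lam : ℕ → ℝ}

lemma lbar_pos_s8 (hpos : ∀ i, 1 ≤ i → i ≤ K → 0 < lam i) (T : Finset ℕ) {j : ℕ}
    (hj : j ∈ Finset.Icc 1 K) (hjT : j ∉ T) : 0 < lbar K lam T := by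
  apply Finset.sum_pos'
  · intro k hk
    have hk' := Finset.mem_sdiff.mp hk
    have := Finset.mem_Icc.mp hk'.1
    exact (hpos k this.1 this.2).le
  · refine ⟨j, Finset.mem_sdiff.mpr ⟨hj, hjT⟩, ?_⟩
    have := Finset.mem_Icc.mp hj
    exact hpos j this.1 this.2

lemma lbar_eq {T : Finset ℕ} (hT : T ⊆ Finset.Icc 1 K) :
    lbar K lam T = (∑ k ∈ Finset.Icc 1 K, lam k) - ∑ k ∈ T, lam k :=
  Finset.sum_sdiff_eq_sub hT

lemma sum_le_sum_of_pairwise (f : ℕ → ℝ) (A B : Finset ℕ) (hcard : A.card = B.card)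
    (h : ∀ a ∈ A \ B, ∀ b ∈ B \ A, f a ≤ f b) : ∑ x ∈ A, f x ≤ ∑ x ∈ B, f x := by
  have hAB := Finset.card_sdiff_add_card_inter A B
  have hBA := Finset.card_sdiff_add_card_inter B A
  have hint : (A ∩ B).card = (B ∩ A).card := by rw [Finset.inter_comm]
  have hcd : (A \ B).card = (B \ A).card := by omega
  have hsplitA := Finset.sum_inter_add_sum_sdiff A B f
  have hsplitB := Finset.sum_inter_add_sum_sdiff B A f
  have hintsum : ∑ x ∈ A ∩ B, f x = ∑ x ∈ B ∩ A, f x := by rw [Finset.inter_comm]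
  have key : ∑ x ∈ A \ B, f x ≤ ∑ x ∈ B \ A, f x := by
    rcases (A \ B).eq_empty_or_nonempty with he | hne
    · have : (B \ A) = ∅ := Finset.card_eq_zero.mp (by rw [← hcd, he]; simp)
      rw [he, this]
    · have hBAne : (B \ A).Nonempty := by
        rw [← Finset.card_pos, ← hcd, Finset.card_pos]; exact hne
      set c := (B \ A).inf' hBAne f with hc
      calc ∑ x ∈ A \ B, f x ≤ (A \ B).card • c := by
            apply Finset.sum_le_card_nsmul
            intro a ha
            exact Finset.le_inf' hBAne f fun b hb => h a ha b hb
        _ = (B \ A).card • c := by rw [hcd]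
        _ ≤ ∑ x ∈ B \ A, f x := Finset.card_nsmul_le_sum _ _ _ (fun b hb => Finset.inf'_le f hb)
  linarith

lemma pW_eq_s8 (u : ℕ) : pW K M lam u = (1 / (K.choose M : ℝ)) * lam u *
    ∑ s ∈ Finset.powersetCard M ((Finset.Icc 1 K).erase u), (lbar K lam s)⁻¹ := by
  rw [pW, Finset.sum_congr rfl
    (fun s _ => by rw [pjoint]; ring :
      ∀ s ∈ Finset.powersetCard M ((Finset.Icc 1 K).erase u),
        pjoint K M lam u s = (1 / (K.choose M : ℝ)) * lam u * (lbar K lam s)⁻¹),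
    ← Finset.mul_sum]

lemma SS_nonneg (hpos : ∀ i, 1 ≤ i → i ≤ K → 0 < lam i) {u : ℕ} (hu : u ∈ Finset.Icc 1 K) :
    0 ≤ ∑ s ∈ Finset.powersetCard M ((Finset.Icc 1 K).erase u), (lbar K lam s)⁻¹ := by
  apply Finset.sum_nonneg
  intro s hs
  have hsub := (Finset.mem_powersetCard.mp hs).1
  have hus : u ∉ s := fun h => (Finset.mem_erase.mp (hsub h)).1 rfl
  exact (inv_pos.mpr (lbar_pos_s8 hpos s hu hus)).le

lemma SS_mono (hpos : ∀ i, 1 ≤ i → i ≤ K → 0 < lam i)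
    (hmono : ∀ i j, 1 ≤ i → i ≤ j → j ≤ K → lam j ≤ lam i)
    {w i : ℕ} (hw1 : 1 ≤ w) (hiK : i ≤ K) (hwi : w ≤ i) :
    ∑ s ∈ Finset.powersetCard M ((Finset.Icc 1 K).erase w), (lbar K lam s)⁻¹ ≤
    ∑ s ∈ Finset.powersetCard M ((Finset.Icc 1 K).erase i), (lbar K lam s)⁻¹ := by
  rcases eq_or_lt_of_le hwi with heq | hlt
  · subst heq; exact le_refl _
  have hwK : w ≤ K := le_trans hwi hiK
  have hi1 : 1 ≤ i := le_trans hw1 hwi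
  have hwI : w ∈ Finset.Icc 1 K := Finset.mem_Icc.mpr ⟨hw1, hwK⟩
  have hiI : i ∈ Finset.Icc 1 K := Finset.mem_Icc.mpr ⟨hi1, hiK⟩
  have hne : w ≠ i := Nat.ne_of_lt hlt
  set φ : Finset ℕ → Finset ℕ := fun t => if w ∈ t then insert i (t.erase w) else t with hφ
  set ψ : Finset ℕ → Finset ℕ := fun t => if i ∈ t then insert w (t.erase i) else t with hψ
  have hmemφ : ∀ t ∈ Finset.powersetCard M ((Finset.Icc 1 K).erase i),
      φ t ∈ Finset.powersetCard M ((Finset.Icc 1 K).erase w) := by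
    intro t ht
    obtain ⟨hsub, hcard⟩ := Finset.mem_powersetCard.mp ht
    have hit : i ∉ t := fun h => (Finset.mem_erase.mp (hsub h)).1 rfl
    by_cases hwt : w ∈ t
    · rw [hφ]; simp only [hwt, if_true]
      apply Finset.mem_powersetCard.mpr
      constructor
      · intro x hx
        rcases Finset.mem_insert.mp hx with hx | hx
        · subst hx; exact Finset.mem_erase.mpr ⟨hne.symm, hiI⟩
        · obtain ⟨hxw, hxt⟩ := Finset.mem_erase.mp hx
          exact Finset.mem_erase.mpr ⟨hxw, (Finset.mem_erase.mp (hsub hxt)).2⟩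
      · have hi' : i ∉ t.erase w := fun h => hit (Finset.mem_of_mem_erase h)
        rw [Finset.card_insert_of_notMem hi', Finset.card_erase_of_mem hwt, hcard]
        have hM1 : 1 ≤ M := by
          rcases Nat.eq_zero_or_pos M with h0 | h1
          · exfalso; rw [h0, Finset.card_eq_zero] at hcard; rw [hcard] at hwt; simp at hwt
          · exact h1
        omega
    · rw [hφ]; simp only [hwt, if_false]
      apply Finset.mem_powersetCard.mpr
      refine ⟨fun x hx => ?_, hcard⟩
      have := Finset.mem_erase.mp (hsub hx)
      exact Finset.mem_erase.mpr ⟨fun h => hwt (h ▸ hx), this.2⟩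
  have hmemψ : ∀ t ∈ Finset.powersetCard M ((Finset.Icc 1 K).erase w),
      ψ t ∈ Finset.powersetCard M ((Finset.Icc 1 K).erase i) := by
    intro t ht
    obtain ⟨hsub, hcard⟩ := Finset.mem_powersetCard.mp ht
    have hwt : w ∉ t := fun h => (Finset.mem_erase.mp (hsub h)).1 rfl
    by_cases hit : i ∈ t
    · rw [hψ]; simp only [hit, if_true]
      apply Finset.mem_powersetCard.mpr
      constructor
      · intro x hx
        rcases Finset.mem_insert.mp hx with hx | hx
        · subst hx; exact Finset.mem_erase.mpr ⟨hne, hwI⟩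
        · obtain ⟨hxi, hxt⟩ := Finset.mem_erase.mp hx
          exact Finset.mem_erase.mpr ⟨hxi, (Finset.mem_erase.mp (hsub hxt)).2⟩
      · have hw' : w ∉ t.erase i := fun h => hwt (Finset.mem_of_mem_erase h)
        rw [Finset.card_insert_of_notMem hw', Finset.card_erase_of_mem hit, hcard]
        have hM1 : 1 ≤ M := by
          rcases Nat.eq_zero_or_pos M with h0 | h1
          · exfalso; rw [h0, Finset.card_eq_zero] at hcard; rw [hcard] at hit; simp at hit
          · exact h1
        omega
    · rw [hψ]; simp only [hit, if_false]
      apply Finset.mem_powersetCard.mpr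
      refine ⟨fun x hx => ?_, hcard⟩
      have := Finset.mem_erase.mp (hsub hx)
      exact Finset.mem_erase.mpr ⟨fun h => hit (h ▸ hx), this.2⟩
  have hψφ : ∀ t ∈ Finset.powersetCard M ((Finset.Icc 1 K).erase i), ψ (φ t) = t := by
    intro t ht
    obtain ⟨hsub, _⟩ := Finset.mem_powersetCard.mp ht
    have hit : i ∉ t := fun h => (Finset.mem_erase.mp (hsub h)).1 rfl
    by_cases hwt : w ∈ t
    · rw [hφ]; simp only [hwt, if_true]
      rw [hψ]
      have hi' : i ∈ insert i (t.erase w) := Finset.mem_insert_self _ _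
      simp only [hi', if_true]
      have hi'' : i ∉ t.erase w := fun h => hit (Finset.mem_of_mem_erase h)
      rw [Finset.erase_insert hi'', Finset.insert_erase hwt]
    · rw [hφ]; simp only [hwt, if_false]
      rw [hψ]; simp only [hit, if_false]
  have hφψ : ∀ t ∈ Finset.powersetCard M ((Finset.Icc 1 K).erase w), φ (ψ t) = t := by
    intro t ht
    obtain ⟨hsub, _⟩ := Finset.mem_powersetCard.mp ht
    have hwt : w ∉ t := fun h => (Finset.mem_erase.mp (hsub h)).1 rfl
    by_cases hit : i ∈ t
    · rw [hψ]; simp only [hit, if_true]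
      rw [hφ]
      have hw' : w ∈ insert w (t.erase i) := Finset.mem_insert_self _ _
      simp only [hw', if_true]
      have hw'' : w ∉ t.erase i := fun h => hwt (Finset.mem_of_mem_erase h)
      rw [Finset.erase_insert hw'', Finset.insert_erase hit]
    · rw [hψ]; simp only [hit, if_false]
      rw [hφ]; simp only [hwt, if_false]
  have hsum : ∑ s ∈ Finset.powersetCard M ((Finset.Icc 1 K).erase w), (lbar K lam s)⁻¹ =
      ∑ t ∈ Finset.powersetCard M ((Finset.Icc 1 K).erase i), (lbar K lam (φ t))⁻¹ := by
    apply Finset.sum_nbij' ψ φ hmemψ hmemφ hφψ hψφ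
    intro a ha
    rw [hφψ a ha]
  rw [hsum]
  apply Finset.sum_le_sum
  intro t ht
  obtain ⟨hsub, _⟩ := Finset.mem_powersetCard.mp ht
  have hit : i ∉ t := fun h => (Finset.mem_erase.mp (hsub h)).1 rfl
  have htI : t ⊆ Finset.Icc 1 K := fun x hx => (Finset.mem_erase.mp (hsub hx)).2
  have hlt0 : 0 < lbar K lam t := lbar_pos_s8 hpos t hiI hit
  apply inv_anti₀ hlt0
  by_cases hwt : w ∈ t
  · rw [hφ]; simp only [hwt, if_true]
    have hφI : insert i (t.erase w) ⊆ Finset.Icc 1 K := by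
      intro x hx
      rcases Finset.mem_insert.mp hx with hx | hx
      · subst hx; exact hiI
      · exact htI (Finset.mem_of_mem_erase hx)
    rw [lbar_eq htI, lbar_eq hφI]
    have hi'' : i ∉ t.erase w := fun h => hit (Finset.mem_of_mem_erase h)
    rw [Finset.sum_insert hi'', Finset.sum_erase_eq_sub hwt]
    have : lam i ≤ lam w := hmono w i hw1 hwi hiK
    linarith
  · rw [hφ]; simp only [hwt, if_false]; exact le_refl _

lemma pjoint_pos (hpos : ∀ i, 1 ≤ i → i ≤ K → 0 < lam i) (hMK' : M ≤ K) {u : ℕ}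
    (hu : u ∈ Finset.Icc 1 K) (T : Finset ℕ) (huT : u ∉ T) : 0 < pjoint K M lam u T := by
  have hu' := Finset.mem_Icc.mp hu
  have hC : (0 : ℝ) < (K.choose M : ℝ) := by
    exact_mod_cast Nat.choose_pos hMK'
  exact mul_pos (by positivity) (div_pos (hpos u hu'.1 hu'.2) (lbar_pos_s8 hpos T hu huT))

lemma pW_pos (hpos : ∀ i, 1 ≤ i → i ≤ K → 0 < lam i) (hMK : M + 1 ≤ K) {u : ℕ}
    (hu : u ∈ Finset.Icc 1 K) : 0 < pW K M lam u := by
  apply Finset.sum_pos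
  · intro s hs
    have hsub := (Finset.mem_powersetCard.mp hs).1
    have hus : u ∉ s := fun h => (Finset.mem_erase.mp (hsub h)).1 rfl
    exact pjoint_pos hpos (by omega) hu s hus
  · rw [Finset.powersetCard_nonempty]
    rw [Finset.card_erase_of_mem hu, Nat.card_Icc]
    omega

end aux

theorem stmt8 {K M : ℕ} (hM : 1 ≤ M) (hMK : M + 1 ≤ K) (lam : ℕ → ℝ)
    (hmono : ∀ i j, 1 ≤ i → i ≤ j → j ≤ K → lam j ≤ lam i)
    (hpos : ∀ i, 1 ≤ i → i ≤ K → 0 < lam i) :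
    0 < gamma0 K M lam ∧
    ∀ w ∈ Finset.Icc 1 K, ∀ s ∈ Finset.powersetCard M ((Finset.Icc 1 K).erase w),
      0 < gammaWS K M lam (gamma0 K M lam) w s ∧
        gammaWS K M lam (gamma0 K M lam) w s ≤ 1 := by
  have hK1 : 1 ≤ K := by omega
  have h1I : (1 : ℕ) ∈ Finset.Icc 1 K := Finset.mem_Icc.mpr ⟨le_refl _, hK1⟩
  have hKM1 : 1 ≤ K - M := by omega
  have hp1 : 0 < pjoint K M lam 1 (Finset.Icc 2 (M + 1)) := by
    apply pjoint_pos hpos (by omega) h1I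
    simp [Finset.mem_Icc]
  have hpW1 : 0 < pW K M lam 1 := pW_pos hpos hMK h1I
  have hIccsub : ∀ {i : ℕ}, i ∈ Finset.Icc (K - M) K → i ∈ Finset.Icc 1 K := by
    intro i hi
    have := Finset.mem_Icc.mp hi
    exact Finset.mem_Icc.mpr ⟨by omega, this.2⟩
  have hg0 : 0 < gamma0 K M lam := by
    rw [gamma0, Finset.lt_inf'_iff]
    intro i hi
    apply lt_min one_pos
    apply div_pos
    · exact mul_pos (pjoint_pos hpos (by omega) (hIccsub hi) _ (Finset.notMem_erase i _)) hpW1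
    · exact mul_pos hp1 (pW_pos hpos hMK (hIccsub hi))
  refine ⟨hg0, ?_⟩
  intro w hw s hs
  obtain ⟨hw1, hwK⟩ := Finset.mem_Icc.mp hw
  obtain ⟨hsub, hscard⟩ := Finset.mem_powersetCard.mp hs
  have hws : w ∉ s := fun h => (Finset.mem_erase.mp (hsub h)).1 rfl
  have hsI : s ⊆ Finset.Icc 1 K := fun x hx => (Finset.mem_erase.mp (hsub hx)).2
  have hpws : 0 < pjoint K M lam w s := pjoint_pos hpos (by omega) hw s hws
  have hpWw : 0 < pW K M lam w := pW_pos hpos hMK hw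
  -- the pivot index
  set i := max w (K - M) with hidef
  have hiKM : K - M ≤ i := le_max_right _ _
  have hiK : i ≤ K := max_le hwK (Nat.sub_le K M)
  have hwi : w ≤ i := le_max_left _ _
  have hi1 : 1 ≤ i := le_trans hw1 hwi
  have hiIcc : i ∈ Finset.Icc (K - M) K := Finset.mem_Icc.mpr ⟨hiKM, hiK⟩
  have hiI : i ∈ Finset.Icc 1 K := Finset.mem_Icc.mpr ⟨hi1, hiK⟩
  set t := (Finset.Icc (K - M) K).erase i with htdef
  have hpWi : 0 < pW K M lam i := pW_pos hpos hMK hiI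
  have hit : i ∉ t := Finset.notMem_erase i _
  have hpit : 0 < pjoint K M lam i t := pjoint_pos hpos (by omega) hiI t hit
  have htI : t ⊆ Finset.Icc 1 K := fun x hx =>
    hIccsub (Finset.mem_of_mem_erase hx)
  have htcard : t.card = M := by
    rw [htdef, Finset.card_erase_of_mem hiIcc, Nat.card_Icc]
    omega
  -- sum over t is the smallest possible
  have hsum_le : ∑ k ∈ t, lam k ≤ ∑ k ∈ s, lam k := by
    apply sum_le_sum_of_pairwise lam t s (by rw [htcard, hscard])
    intro a ha b hb
    obtain ⟨hat, _⟩ := Finset.mem_sdiff.mp ha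
    obtain ⟨hbs, hbt⟩ := Finset.mem_sdiff.mp hb
    have haIcc : a ∈ Finset.Icc (K - M) K := Finset.mem_of_mem_erase hat
    obtain ⟨haKM, haK⟩ := Finset.mem_Icc.mp haIcc
    have hbI := Finset.mem_erase.mp (hsub hbs)
    obtain ⟨hb1, hbK⟩ := Finset.mem_Icc.mp hbI.2
    have hbw : b ≠ w := hbI.1
    have hba : b ≤ a := by
      by_cases hbKM : K - M ≤ b
      · have hbi : b = i := by
          by_contra hne
          exact hbt (Finset.mem_erase.mpr ⟨hne, Finset.mem_Icc.mpr ⟨hbKM, hbK⟩⟩)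
        rcases max_choice w (K - M) with hmax | hmax
        · exact absurd (hbi.trans (hidef ▸ hmax)) hbw
        · rw [hbi, hidef, hmax]; exact haKM
      · omega
    exact hmono b a hb1 hba haK
  have hlbs : 0 < lbar K lam s := lbar_pos_s8 hpos s hw hws
  have hlbt : 0 < lbar K lam t := lbar_pos_s8 hpos t hiI hit
  have hlb_le : lbar K lam s ≤ lbar K lam t := by
    rw [lbar_eq hsI, lbar_eq htI]; linarith
  have hSS := SS_mono hpos hmono (M := M) hw1 hiK hwi
  have hSSi := SS_nonneg (M := M) hpos hiI
  have hSSw := SS_nonneg (M := M) hpos hw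
  -- key inequality : pjoint i t * pW w ≤ pjoint w s * pW i
  have hC : (0 : ℝ) < (K.choose M : ℝ) := by
    exact_mod_cast Nat.choose_pos (by omega : M ≤ K)
  have key : pjoint K M lam i t * pW K M lam w ≤ pjoint K M lam w s * pW K M lam i := by
    have hdiv : (∑ u ∈ Finset.powersetCard M ((Finset.Icc 1 K).erase w), (lbar K lam u)⁻¹) /
        lbar K lam t ≤
        (∑ u ∈ Finset.powersetCard M ((Finset.Icc 1 K).erase i), (lbar K lam u)⁻¹) /
        lbar K lam s := by
      rw [div_le_div_iff₀ hlbt hlbs]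
      exact mul_le_mul hSS hlb_le hlbs.le hSSi
    have hli : 0 < lam i := hpos i hi1 hiK
    have hlw : 0 < lam w := hpos w hw1 hwK
    calc pjoint K M lam i t * pW K M lam w
        = ((1 / (K.choose M : ℝ))^2 * (lam i * lam w)) *
          ((∑ u ∈ Finset.powersetCard M ((Finset.Icc 1 K).erase w), (lbar K lam u)⁻¹) /
            lbar K lam t) := by
          rw [pjoint, pW_eq_s8]; ring
      _ ≤ ((1 / (K.choose M : ℝ))^2 * (lam i * lam w)) *
          ((∑ u ∈ Finset.powersetCard M ((Finset.Icc 1 K).erase i), (lbar K lam u)⁻¹) /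
            lbar K lam s) := by
          apply mul_le_mul_of_nonneg_left hdiv; positivity
      _ = pjoint K M lam w s * pW K M lam i := by
          rw [pjoint, pW_eq_s8]; ring
  -- gamma0 ≤ A_i
  have hg0le : gamma0 K M lam ≤ pjoint K M lam i t * pW K M lam 1
      / (pjoint K M lam 1 (Finset.Icc 2 (M + 1)) * pW K M lam i) := by
    refine le_trans (Finset.inf'_le _ hiIcc) (min_le_right _ _)
  have h1 : gamma0 K M lam * (pjoint K M lam 1 (Finset.Icc 2 (M + 1)) * pW K M lam i) ≤
      pjoint K M lam i t * pW K M lam 1 :=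
    (le_div_iff₀ (mul_pos hp1 hpWi)).mp hg0le
  constructor
  · rw [gammaWS]
    exact div_pos (mul_pos (mul_pos hg0 hp1) hpWw) (mul_pos hpws hpW1)
  · rw [gammaWS, div_le_one (mul_pos hpws hpW1)]
    have hchain : (gamma0 K M lam * pjoint K M lam 1 (Finset.Icc 2 (M + 1)) * pW K M lam w) *
        pW K M lam i ≤ (pjoint K M lam w s * pW K M lam 1) * pW K M lam i := by
      calc (gamma0 K M lam * pjoint K M lam 1 (Finset.Icc 2 (M + 1)) * pW K M lam w) *
            pW K M lam i
          = (gamma0 K M lam * (pjoint K M lam 1 (Finset.Icc 2 (M + 1)) * pW K M lam i)) *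
            pW K M lam w := by ring
        _ ≤ (pjoint K M lam i t * pW K M lam 1) * pW K M lam w :=
            mul_le_mul_of_nonneg_right h1 hpWw.le
        _ = (pjoint K M lam i t * pW K M lam w) * pW K M lam 1 := by ring
        _ ≤ (pjoint K M lam w s * pW K M lam i) * pW K M lam 1 :=
            mul_le_mul_of_nonneg_right key hpW1.le
        _ = (pjoint K M lam w s * pW K M lam 1) * pW K M lam i := by ring
    exact le_of_mul_le_mul_right hchain hpWi
end
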